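/- arXiv:2412.01022 — 2 statements merged into one kernel-verified Lean document; each statement's English description precedes it below -/
import Mathlib

section
/- Let E ⊆ ℝⁿ (n ≥ 2) be an open weakly 1-convex set whose 1-nonconvexity-point set E^△ is nonempty. Then E^△ is itself weakly 1-convex, i.e., through every boundary point of E^△ there passes a straight line not intersecting E^△. -/
open Set Metric

/-- The closed ray with endpoint `x` in direction `α`. -/
def ray {n : ℕ} (x α : EuclideanSpace ℝ (Fin n)) : Set (EuclideanSpace ℝ (Fin n)) :=
  {z | ∃ t : ℝ, 0 ≤ t ∧ z = x + t • α}

/-- The straight line through `x` in direction `α`. -/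
def line {n : ℕ} (x α : EuclideanSpace ℝ (Fin n)) : Set (EuclideanSpace ℝ (Fin n)) :=
  {z | ∃ t : ℝ, z = x + t • α}

/-- The set `E^◇` of 1-nonsemiconvexity points of `E`. -/
def diamond {n : ℕ} (E : Set (EuclideanSpace ℝ (Fin n))) : Set (EuclideanSpace ℝ (Fin n)) :=
  {x | x ∉ E ∧ ∀ α : EuclideanSpace ℝ (Fin n), ‖α‖ = 1 → (ray x α ∩ E).Nonempty}

/-- The set `E^△` of 1-nonconvexity points of `E`. -/
def triangle {n : ℕ} (E : Set (EuclideanSpace ℝ (Fin n))) : Set (EuclideanSpace ℝ (Fin n)) :=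
  {x | x ∉ E ∧ ∀ α : EuclideanSpace ℝ (Fin n), ‖α‖ = 1 → (line x α ∩ E).Nonempty}

/-- An (open) set is weakly 1-semiconvex if through every boundary point
there passes a closed ray missing the set. -/
def WeaklySemiconvex {n : ℕ} (E : Set (EuclideanSpace ℝ (Fin n))) : Prop :=
  ∀ x ∈ frontier E, ∃ α : EuclideanSpace ℝ (Fin n), ‖α‖ = 1 ∧ ray x α ∩ E = ∅

/-- An (open) set is weakly 1-convex if through every boundary point
there passes a straight line missing the set. -/
def WeaklyConvex {n : ℕ} (E : Set (EuclideanSpace ℝ (Fin n))) : Prop :=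
  ∀ x ∈ frontier E, ∃ α : EuclideanSpace ℝ (Fin n), ‖α‖ = 1 ∧ line x α ∩ E = ∅


theorem triangle_isOpen {n : ℕ} (E : Set (EuclideanSpace ℝ (Fin n)))
    (hE : IsOpen E) (hwc : WeaklyConvex E) : IsOpen (triangle E) := by
  rw [isOpen_iff_mem_nhds]
  intro x hx
  obtain ⟨hxE, hxl⟩ := hx
  have hxc : x ∉ closure E := by
    intro h
    have hf : x ∈ frontier E := ⟨h, by simpa [hE.interior_eq] using hxE⟩
    obtain ⟨α, hα, hαE⟩ := hwc x hf
    obtain ⟨z, hz1, hz2⟩ := hxl α hα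
    rw [eq_empty_iff_forall_notMem] at hαE
    exact hαE z ⟨hz1, hz2⟩
  set V : Set (EuclideanSpace ℝ (Fin n) × EuclideanSpace ℝ (Fin n)) :=
    ⋃ t : ℝ, (fun p : EuclideanSpace ℝ (Fin n) × EuclideanSpace ℝ (Fin n) => p.1 + t • p.2) ⁻¹' E with hVdef
  have hVopen : IsOpen V := isOpen_iUnion fun t => hE.preimage (by fun_prop)
  have hsub : ({x} : Set (EuclideanSpace ℝ (Fin n))) ×ˢ (sphere (0 : EuclideanSpace ℝ (Fin n)) 1) ⊆ V := by
    rintro ⟨y, α⟩ ⟨hy, hα⟩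
    simp only [mem_singleton_iff] at hy
    subst hy
    obtain ⟨z, ⟨t, hzt⟩, hzE⟩ := hxl α (by simpa using hα)
    exact mem_iUnion.2 ⟨t, by simpa [← hzt] using hzE⟩
  obtain ⟨u, v, hu, hv, hxu, hsv, huv⟩ :=
    generalized_tube_lemma isCompact_singleton (isCompact_sphere (0 : EuclideanSpace ℝ (Fin n)) 1)
      hVopen hsub
  have hmem : (u ∩ (closure E)ᶜ) ∈ nhds x :=
    (hu.inter isClosed_closure.isOpen_compl).mem_nhds ⟨hxu rfl, hxc⟩
  refine Filter.mem_of_superset hmem ?_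
  rintro y ⟨hyu, hyc⟩
  refine ⟨fun h => hyc (subset_closure h), fun α hα => ?_⟩
  have hyV : (y, α) ∈ V := huv ⟨hyu, hsv (by simpa using hα)⟩
  obtain ⟨t, ht⟩ := mem_iUnion.1 hyV
  exact ⟨y + t • α, ⟨t, rfl⟩, ht⟩

theorem triangle_weaklyConvex {n : ℕ} (hn : 2 ≤ n) (E : Set (EuclideanSpace ℝ (Fin n)))
    (hE : IsOpen E) (hwc : WeaklyConvex E) (hne : (triangle E).Nonempty) :
    WeaklyConvex (triangle E) := by
  intro x hx
  have hop := triangle_isOpen E hE hwc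
  have hxt : x ∉ triangle E := fun h => hx.2 (by simpa [hop.interior_eq] using h)
  have hxE : x ∉ E := by
    intro h
    obtain ⟨y, hyE, hyt⟩ := mem_closure_iff.1 hx.1 E hE h
    exact hyt.1 hyE
  have : ¬ ∀ α : EuclideanSpace ℝ (Fin n), ‖α‖ = 1 → (line x α ∩ E).Nonempty := by
    intro h; exact hxt ⟨hxE, h⟩
  push_neg at this
  obtain ⟨α, hα, hαE⟩ := this
  refine ⟨α, hα, ?_⟩
  rw [eq_empty_iff_forall_notMem]
  rintro z ⟨⟨t, rfl⟩, hz⟩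
  obtain ⟨w, ⟨s, hws⟩, hwE⟩ := hz.2 α hα
  rw [eq_empty_iff_forall_notMem] at hαE
  exact hαE w ⟨⟨t + s, by rw [hws, add_smul]; abel⟩, hwE⟩
end

section
/- Let E ⊆ ℝⁿ (n ≥ 2) be a closed set with nonempty interior. If E is weakly 1-convex (i.e., E can be approximated from the outside by a family of open weakly 1-convex sets), then the interior of E is weakly 1-convex (i.e., through every boundary point of Int E there passes a straight line not intersecting Int E). -/
open Set Metric

lemma preconn_inter_frontier {X : Type*} [TopologicalSpace X] {s u : Set X}
    (hs : IsPreconnected s) (h1 : (s ∩ u).Nonempty) (h2 : (s \ u).Nonempty) :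
    (s ∩ frontier u).Nonempty := by
  by_contra hne
  rw [Set.not_nonempty_iff_eq_empty] at hne
  have hsub : s ⊆ interior u ∪ (closure u)ᶜ := by
    intro y hy
    have hyf : y ∉ frontier u := fun hf => (Set.eq_empty_iff_forall_notMem.mp hne) y ⟨hy, hf⟩
    by_cases hyc : y ∈ closure u
    · left
      by_contra hyi
      exact hyf ⟨hyc, hyi⟩
    · right; exact hyc
  have hint : (s ∩ interior u).Nonempty := by
    obtain ⟨y, hys, hyu⟩ := h1
    refine ⟨y, hys, ?_⟩
    rcases hsub hys with h | h
    · exact h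
    · exact absurd (subset_closure hyu) h
  have hext : (s ∩ (closure u)ᶜ).Nonempty := by
    obtain ⟨y, hys, hyu⟩ := h2
    refine ⟨y, hys, ?_⟩
    rcases hsub hys with h | h
    · exact absurd (interior_subset h) hyu
    · exact h
  obtain ⟨y, -, hy1, hy2⟩ :=
    hs (interior u) (closure u)ᶜ isOpen_interior (isClosed_closure.isOpen_compl) hsub hint hext
  exact hy2 (subset_closure (interior_subset hy1))
theorem interior_weaklyConvex {n : ℕ} (hn : 2 ≤ n) (E : Set (EuclideanSpace ℝ (Fin n)))
    (hcl : IsClosed E) (hint : (interior E).Nonempty)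
    (G : ℕ → Set (EuclideanSpace ℝ (Fin n)))
    (hGopen : ∀ k, IsOpen (G k)) (hGwc : ∀ k, WeaklyConvex (G k))
    (hGnest : ∀ k, closure (G (k + 1)) ⊆ G k) (hGE : E = ⋂ k, G k) :
    WeaklyConvex (interior E) := by
  have hanti : Antitone G := antitone_nat_of_succ_le fun k => subset_closure.trans (hGnest k)
  have hEsub : ∀ k, E ⊆ G k := fun k => by rw [hGE]; exact Set.iInter_subset G k
  intro x hx
  have hxcl : x ∈ closure (interior E) := hx.1
  have hxE : x ∈ E := by
    have := closure_mono (interior_subset (s := E)) hxcl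
    rwa [hcl.closure_eq] at this
  have hxnotint : x ∉ interior E := by
    intro h
    exact hx.2 (by rwa [interior_interior])
  have hxclC : x ∈ closure Eᶜ := by rw [closure_compl]; exact hxnotint
  have key : ∀ m : ℕ, ∃ (k : ℕ) (p α : EuclideanSpace ℝ (Fin n)),
      m ≤ k ∧ dist (p) x < 1/(m+1) ∧ ‖α‖ = 1 ∧ line p α ∩ G k = ∅ := by
    intro m
    have hpos : (0:ℝ) < 1/(m+1) := by positivity
    obtain ⟨z, hz1, hz2⟩ := Metric.mem_closure_iff.mp hxclC (1/(m+1)) hpos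
    have hz1' : ∃ k₀, z ∉ G k₀ := by
      by_contra h
      push_neg at h
      exact hz1 (by rw [hGE]; exact Set.mem_iInter.mpr h)
    obtain ⟨k₀, hk₀⟩ := hz1'
    have hzk : z ∉ G (max m k₀) := fun h => hk₀ (hanti (le_max_right m k₀) h)
    have hxk : x ∈ G (max m k₀) := hEsub _ hxE
    have hconn : IsPreconnected (segment ℝ x z) := (convex_segment x z).isPreconnected
    obtain ⟨p, hpseg, hpf⟩ := preconn_inter_frontier hconn
      ⟨x, left_mem_segment ℝ x z, hxk⟩ ⟨z, right_mem_segment ℝ x z, hzk⟩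
    obtain ⟨α, hα1, hα2⟩ := hGwc _ p hpf
    refine ⟨max m k₀, p, α, le_max_left _ _, ?_, hα1, hα2⟩
    have hsub : segment ℝ x z ⊆ ball x (1/(m+1)) :=
      (convex_ball x _).segment_subset (mem_ball_self hpos) (by rwa [mem_ball, dist_comm])
    simpa [mem_ball] using hsub hpseg
  choose k p α hk hp hα hline using key
  have hmem : ∀ m, α m ∈ sphere (0 : EuclideanSpace ℝ (Fin n)) 1 := fun m => by
    simp [mem_sphere_iff_norm, hα m]
  obtain ⟨β, hβ, φ, hφmono, hφtend⟩ := (isCompact_sphere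
    (0 : EuclideanSpace ℝ (Fin n)) 1).tendsto_subseq hmem
  have hβ1 : ‖β‖ = 1 := by simpa [mem_sphere_iff_norm] using hβ
  have hptend : Filter.Tendsto p Filter.atTop (nhds x) := by
    rw [tendsto_iff_dist_tendsto_zero]
    refine squeeze_zero (fun m => dist_nonneg) (fun m => (hp m).le) ?_
    exact tendsto_one_div_add_atTop_nhds_zero_nat
  refine ⟨β, hβ1, ?_⟩
  rw [Set.eq_empty_iff_forall_notMem]
  rintro q ⟨⟨t, rfl⟩, hq⟩
  have htend : Filter.Tendsto (fun m => p (φ m) + t • α (φ m)) Filter.atTop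
      (nhds (x + t • β)) :=
    ((hptend.comp hφmono.tendsto_atTop).add (hφtend.const_smul t))
  have hev : ∀ᶠ m in Filter.atTop, p (φ m) + t • α (φ m) ∈ interior E :=
    htend.eventually_mem (isOpen_interior.mem_nhds hq)
  obtain ⟨m, hm⟩ := hev.exists
  have : p (φ m) + t • α (φ m) ∈ line (p (φ m)) (α (φ m)) ∩ G (k (φ m)) :=
    ⟨⟨t, rfl⟩, hEsub _ (interior_subset hm)⟩
  rw [hline (φ m)] at this
  exact this
end
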